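/- arXiv:1710.08208 — 2 statements merged into one kernel-verified Lean document; each statement's English description precedes it below -/
import Mathlib

section
/- For H ∈ (0,1), define ρ_i = (1/(2 i^H)) ((i+1)^{2H} - i^{2H} - 1) for integers i ≥ 1. Then there exists ρ < 1 such that |ρ_i| ≤ ρ for all i ≥ 1. -/
open Real

/-- Bernoulli-type bound: for `x ≥ 1` and `0 ≤ H ≤ 1`, `(x+1)^H ≤ x^H + H`. -/
lemma rpow_add_one_le_aux {x H : ℝ} (hx : 1 ≤ x) (hH0 : 0 ≤ H) (hH1 : H ≤ 1) :
    (x + 1) ^ H ≤ x ^ H + H := by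
  have hx0 : 0 < x := lt_of_lt_of_le one_pos hx
  have h1 : x + 1 = x * (1 + 1/x) := by field_simp
  have h2 : (x + 1) ^ H = x ^ H * (1 + 1/x) ^ H := by
    rw [h1, Real.mul_rpow hx0.le (by positivity)]
  have h3 : (1 + 1/x) ^ H ≤ 1 + H * (1/x) := by
    have := rpow_one_add_le_one_add_mul_self (s := 1/x) (by nlinarith [one_div_pos.mpr hx0]) hH0 hH1
    linarith
  have h5 : x ^ H / x ≤ 1 := by
    rw [div_le_one hx0]
    calc x ^ H ≤ x ^ (1:ℝ) := Real.rpow_le_rpow_of_exponent_le hx hH1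
    _ = x := Real.rpow_one x
  have hxH : 0 < x ^ H := Real.rpow_pos_of_pos hx0 H
  have h6 := mul_le_mul_of_nonneg_left h3 hxH.le
  have h7 : x ^ H * (1 + H * (1/x)) = x ^ H + H * (x ^ H / x) := by ring
  nlinarith

/-- The correlations ρ_i are uniformly bounded away from ±1. -/
theorem rho_uniformly_bounded (H : ℝ) (hH : H ∈ Set.Ioo (0:ℝ) 1) :
    ∃ ρ : ℝ, ρ < 1 ∧ ∀ i : ℕ, 1 ≤ i →
      |(1 / (2 * (i:ℝ) ^ H)) * (((i:ℝ)+1) ^ (2*H) - (i:ℝ) ^ (2*H) - 1)| ≤ ρ := by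
  obtain ⟨hH0, hH1⟩ := hH
  refine ⟨max H (1/2), max_lt hH1 (by norm_num), ?_⟩
  intro i hi
  have hx : (1:ℝ) ≤ (i:ℝ) := by exact_mod_cast hi
  set x : ℝ := (i : ℝ) with hxdef
  have hx0 : 0 < x := lt_of_lt_of_le one_pos hx
  have hsq : ∀ y : ℝ, 0 ≤ y → y ^ (2*H) = (y^H)^2 := by
    intro y hy
    rw [mul_comm, Real.rpow_mul hy, ← Real.rpow_natCast (y^H) 2]
    norm_num
  rw [hsq x hx0.le, hsq (x+1) (by linarith)]
  set a : ℝ := x ^ H with ha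
  set b : ℝ := (x + 1) ^ H with hb
  have ha1 : 1 ≤ a := by
    have := Real.rpow_le_rpow zero_le_one hx hH0.le
    simpa [ha] using this
  have hb1 : 1 ≤ b := by
    have := Real.rpow_le_rpow zero_le_one (by linarith : (1:ℝ) ≤ x + 1) hH0.le
    simpa [hb] using this
  have hab : a ≤ b := Real.rpow_le_rpow hx0.le (by linarith) hH0.le
  have hbH : b ≤ a + H := rpow_add_one_le_aux hx hH0.le hH1.le
  have ha0 : 0 < a := lt_of_lt_of_le one_pos ha1
  have hE : 1 / (2 * a) * (b^2 - a^2 - 1) = (b^2 - a^2 - 1) / (2*a) := by ring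
  rw [hE, abs_le]
  constructor
  · rw [le_div_iff₀ (by positivity)]
    have : -(1/2 : ℝ) ≤ -(max H (1/2)) ∨ True := Or.inr trivial
    have hmax : -(max H (1/2)) ≤ -(1/2 : ℝ) := by
      simp [neg_le_neg_iff]
    nlinarith [le_max_right H (1/2 : ℝ)]
  · rw [div_le_iff₀ (by positivity)]
    nlinarith [le_max_left H (1/2 : ℝ), sq_nonneg (H - 1)]
end

section
/- Let Σ, Σ' be d×d symmetric positive definite matrices with entries bounded by K and determinants bounded below by 1/K, and let φ_Σ, φ_{Σ'} denote the centered Gaussian densities with covariances Σ, Σ'. Then there exist constants c_K, C_K > 0 (depending only on d and K) such that for all y ∈ ℝ^d, |φ_Σ(y) − φ_{Σ'}(y)| ≤ C_K (1 + ‖y‖²) exp(−c_K ‖y‖²) · max_{i,j} |Σ_{ij} − Σ'_{ij}|. -/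
open Matrix Real

/-- The centered Gaussian density with covariance matrix `S`. -/
noncomputable def gaussianDensityMat {d : ℕ} (S : Matrix (Fin d) (Fin d) ℝ)
    (y : Fin d → ℝ) : ℝ :=
  (2 * π) ^ (-(d:ℝ)/2) * S.det ^ (-(1:ℝ)/2) * exp (-(y ⬝ᵥ (S⁻¹).mulVec y) / 2)


lemma my_det_abs_le {d : ℕ} (A : Matrix (Fin d) (Fin d) ℝ) {x : ℝ}
    (hx : ∀ i j, |A i j| ≤ x) : |A.det| ≤ d.factorial * x ^ d := by
  have := Matrix.det_le (A := A) (abv := AbsoluteValue.abs) (x := x) hx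
  simpa [Fintype.card_fin, nsmul_eq_mul] using this

lemma my_adjugate_abs_le {d : ℕ} (A : Matrix (Fin d) (Fin d) ℝ) {x : ℝ}
    (hx : ∀ i j, |A i j| ≤ x) (i j : Fin d) :
    |A.adjugate i j| ≤ d.factorial * (max x 1) ^ d := by
  rw [Matrix.adjugate_apply]
  apply my_det_abs_le
  intro k l
  rw [Matrix.updateRow_apply]
  split_ifs with h
  · rcases eq_or_ne l i with rfl | hne
    · simp
    · simp only [Pi.single_eq_of_ne hne, abs_zero]
      exact le_max_of_le_right zero_le_one
  · exact le_max_of_le_left (hx k l)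

lemma my_det_updateRow_expand {d : ℕ} (A : Matrix (Fin d) (Fin d) ℝ) (j : Fin d) (w : Fin d → ℝ) :
    (A.updateRow j w).det = ∑ i, (A.adjugate)ᵀ j i * w i := by
  have h1 : (A.updateRow j w).det = Matrix.cramer Aᵀ w j := by
    rw [Matrix.cramer_apply, ← Matrix.det_transpose (A.updateRow j w), ← Matrix.updateCol_transpose]
  rw [h1, Matrix.cramer_eq_adjugate_mulVec, Matrix.mulVec, Matrix.adjugate_transpose]
  rfl

lemma my_det_sub_le {d : ℕ} (S S' : Matrix (Fin d) (Fin d) ℝ) {K ε : ℝ}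
    (hS : ∀ i j, |S i j| ≤ K) (hS' : ∀ i j, |S' i j| ≤ K)
    (hε : ∀ i j, |S i j - S' i j| ≤ ε) :
    |S.det - S'.det| ≤ d * (d * (d.factorial * (max K 1) ^ d)) * ε := by
  set F : ℝ := d.factorial * (max K 1) ^ d with hF
  set B : ℕ → Matrix (Fin d) (Fin d) ℝ :=
    fun m => Matrix.of fun i j => if (i : ℕ) < m then S' i j else S i j with hBdef
  have hB0 : B 0 = S := by ext i j; simp [hBdef]
  have hBd : B d = S' := by ext i j; simp [hBdef, i.isLt]
  have hBent : ∀ m i j, |B m i j| ≤ K := by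
    intro m i j
    by_cases h : (i : ℕ) < m <;> simp [hBdef, h, hS i j, hS' i j]
  have tele : S'.det - S.det = ∑ m ∈ Finset.range d, ((B (m+1)).det - (B m).det) := by
    rw [Finset.sum_range_sub (fun m => (B m).det), hB0, hBd]
  have key : ∀ m ∈ Finset.range d, |(B (m+1)).det - (B m).det| ≤ d * F * ε := by
    intro m hm
    rw [Finset.mem_range] at hm
    set jm : Fin d := ⟨m, hm⟩ with hjm
    have h1 : B (m+1) = (B m).updateRow jm ((S' jm - S jm) + S jm) := by
      ext i j
      rcases eq_or_ne i jm with rfl | hne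
      · simp [hBdef, Matrix.updateRow_self, hjm]
      · rw [Matrix.updateRow_ne hne]
        have : (i : ℕ) ≠ m := fun h => hne (Fin.ext h)
        by_cases h2 : (i : ℕ) < m
        · simp [hBdef, h2, Nat.lt_succ_of_lt h2]
        · have h3 : ¬ (i : ℕ) < m + 1 := by omega
          simp [hBdef, h2, h3]
    have h2 : B m = (B m).updateRow jm (S jm) := by
      have : (B m) jm = S jm := by
        funext j; simp [hBdef, hjm]
      conv_lhs => rw [← Matrix.updateRow_eq_self (B m) jm]
      rw [this]
    have h3 : (B (m+1)).det - (B m).det = ((B m).updateRow jm (S' jm - S jm)).det := by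
      rw [h1, Matrix.det_updateRow_add]
      rw [← h2]; ring
    rw [h3, my_det_updateRow_expand]
    calc |∑ i, ((B m).adjugate)ᵀ jm i * (S' jm - S jm) i|
        ≤ ∑ i, |((B m).adjugate)ᵀ jm i * (S' jm - S jm) i| := Finset.abs_sum_le_sum_abs _ _
      _ ≤ ∑ _i : Fin d, F * ε := by
          apply Finset.sum_le_sum
          intro i _
          rw [abs_mul]
          have ha : |((B m).adjugate)ᵀ jm i| ≤ F :=
            my_adjugate_abs_le (B m) (hBent m) i jm
          have hw : |(S' jm - S jm) i| ≤ ε := by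
            have := hε jm i
            rw [abs_sub_comm] at this
            simpa using this
          have h0 : (0:ℝ) ≤ |(S' jm - S jm) i| := abs_nonneg _
          have hF0 : (0:ℝ) ≤ F := mul_nonneg (by positivity)
            (pow_nonneg (le_trans zero_le_one (le_max_right _ _)) _)
          exact mul_le_mul ha hw h0 hF0
      _ = d * F * ε := by simp [mul_assoc]
  calc |S.det - S'.det| = |S'.det - S.det| := (abs_sub_comm _ _)
    _ = |∑ m ∈ Finset.range d, ((B (m+1)).det - (B m).det)| := by rw [tele]
    _ ≤ ∑ m ∈ Finset.range d, |(B (m+1)).det - (B m).det| := Finset.abs_sum_le_sum_abs _ _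
    _ ≤ ∑ _m ∈ Finset.range d, d * F * ε := Finset.sum_le_sum key
    _ = d * (d * F) * ε := by simp; ring

lemma my_inv_entry_le {d : ℕ} (S : Matrix (Fin d) (Fin d) ℝ) {K : ℝ} (hK : 0 < K)
    (hS : ∀ i j, |S i j| ≤ K) (hdet : 1 / K < S.det) (i j : Fin d) :
    |S⁻¹ i j| ≤ K * (d.factorial * (max K 1) ^ d) := by
  have hdpos : 0 < S.det := lt_trans (by positivity) hdet
  have hinv : S.det⁻¹ ≤ K := by
    rw [inv_le_comm₀ hdpos hK]
    rw [one_div] at hdet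
    exact le_of_lt hdet
  rw [Matrix.inv_def]
  have : |Ring.inverse S.det| ≤ K := by
    rw [Ring.inverse_eq_inv', abs_of_nonneg (le_of_lt (inv_pos.2 hdpos))]
    exact hinv
  calc |(Ring.inverse S.det • S.adjugate) i j| = |Ring.inverse S.det| * |S.adjugate i j| := by
        simp [abs_mul]
    _ ≤ K * (d.factorial * (max K 1) ^ d) := by
        apply mul_le_mul this (my_adjugate_abs_le S hS i j) (abs_nonneg _) (le_of_lt hK)

lemma my_quadform_abs_le {d : ℕ} (A : Matrix (Fin d) (Fin d) ℝ) {M : ℝ} (hM0 : 0 ≤ M)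
    (hM : ∀ i j, |A i j| ≤ M) (y : Fin d → ℝ) :
    |y ⬝ᵥ A.mulVec y| ≤ M * d * ∑ i, (y i) ^ 2 := by
  have h1 : |y ⬝ᵥ A.mulVec y| ≤ ∑ i, ∑ j, |y i| * (M * |y j|) := by
    rw [dotProduct]
    refine le_trans (Finset.abs_sum_le_sum_abs _ _) (Finset.sum_le_sum fun i _ => ?_)
    rw [Matrix.mulVec, dotProduct, abs_mul, ← Finset.mul_sum]
    rw [Finset.mul_sum]
    refine le_trans (mul_le_mul_of_nonneg_left (Finset.abs_sum_le_sum_abs _ _) (abs_nonneg _)) ?_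
    rw [Finset.mul_sum]
    refine Finset.sum_le_sum fun j _ => ?_
    rw [abs_mul]
    exact mul_le_mul_of_nonneg_left
      (mul_le_mul_of_nonneg_right (hM i j) (abs_nonneg _)) (abs_nonneg _)
  have h2 : ∑ i, ∑ j, |y i| * (M * |y j|) = M * (∑ i, |y i|) ^ 2 := by
    simp_rw [← Finset.mul_sum, ← Finset.sum_mul]
    ring
  have h3 : (∑ i, |y i|) ^ 2 ≤ (d : ℝ) * ∑ i, (y i) ^ 2 := by
    have := sq_sum_le_card_mul_sum_sq (s := Finset.univ) (f := fun i => |y i|)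
    simpa [sq_abs, Finset.card_univ] using this
  calc |y ⬝ᵥ A.mulVec y| ≤ M * (∑ i, |y i|) ^ 2 := by rw [← h2]; exact h1
    _ ≤ M * ((d : ℝ) * ∑ i, (y i) ^ 2) := mul_le_mul_of_nonneg_left h3 hM0
    _ = M * d * ∑ i, (y i) ^ 2 := by ring

lemma my_inv_sub_entry_le {d : ℕ} (S S' : Matrix (Fin d) (Fin d) ℝ)
    (hS : IsUnit S.det) (hS' : IsUnit S'.det) {M ε : ℝ} (hM0 : 0 ≤ M) (hε0 : 0 ≤ ε)
    (hMS : ∀ i j, |S⁻¹ i j| ≤ M) (hMS' : ∀ i j, |S'⁻¹ i j| ≤ M)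
    (hε : ∀ i j, |S i j - S' i j| ≤ ε) (i j : Fin d) :
    |(S⁻¹ - S'⁻¹) i j| ≤ d * d * (M * M * ε) := by
  have hid : S⁻¹ - S'⁻¹ = S⁻¹ * (S' - S) * S'⁻¹ := by
    rw [Matrix.mul_sub, Matrix.sub_mul, Matrix.mul_assoc,
      Matrix.mul_nonsing_inv _ hS', Matrix.nonsing_inv_mul _ hS]
    simp [Matrix.mul_one, Matrix.one_mul]
  rw [hid]
  have hmul : (S⁻¹ * (S' - S) * S'⁻¹) i j = ∑ l, (∑ k, S⁻¹ i k * (S' - S) k l) * S'⁻¹ l j := by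
    simp [Matrix.mul_apply]
  rw [hmul]
  calc |∑ l, (∑ k, S⁻¹ i k * (S' - S) k l) * S'⁻¹ l j|
      ≤ ∑ l, |(∑ k, S⁻¹ i k * (S' - S) k l)| * |S'⁻¹ l j| := by
        refine le_trans (Finset.abs_sum_le_sum_abs _ _) (Finset.sum_le_sum fun l _ => ?_)
        rw [abs_mul]
    _ ≤ ∑ _l : Fin d, (∑ _k : Fin d, M * ε) * M := by
        refine Finset.sum_le_sum fun l _ => ?_
        refine mul_le_mul ?_ (hMS' l j) (abs_nonneg _) (by positivity)
        refine le_trans (Finset.abs_sum_le_sum_abs _ _) (Finset.sum_le_sum fun k _ => ?_)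
        rw [abs_mul]
        refine mul_le_mul (hMS i k) ?_ (abs_nonneg _) hM0
        have := hε k l
        rw [abs_sub_comm] at this
        simpa [abs_sub_comm] using hε k l
    _ = d * d * (M * M * ε) := by simp; ring

lemma my_cs {d : ℕ} (A : Matrix (Fin d) (Fin d) ℝ) (hA : A.PosDef) (y : Fin d → ℝ) :
    (∑ i, (y i) ^ 2) ^ 2 ≤ (y ⬝ᵥ A.mulVec y) * (y ⬝ᵥ A⁻¹.mulVec y) := by
  have hdet : IsUnit A.det := (ne_of_gt hA.det_pos).isUnit
  have hsymm : Aᵀ = A := by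
    have := hA.1
    rwa [← Matrix.conjTranspose_eq_transpose_of_trivial]
  rcases eq_or_ne y 0 with rfl | hy
  · simp
  have hp : 0 < y ⬝ᵥ A.mulVec y := by
    have := hA.dotProduct_mulVec_pos hy
    simpa using this
  set u : Fin d → ℝ := A⁻¹.mulVec y with hu
  have hAu : A.mulVec u = y := by
    rw [hu, Matrix.mulVec_mulVec, Matrix.mul_nonsing_inv _ hdet, Matrix.one_mulVec]
  have huAy : u ⬝ᵥ A.mulVec y = ∑ i, (y i) ^ 2 := by
    rw [Matrix.dotProduct_mulVec, ← Matrix.mulVec_transpose, hsymm, hAu]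
    simp [dotProduct, sq]
  have hyAu : y ⬝ᵥ A.mulVec u = ∑ i, (y i) ^ 2 := by
    rw [hAu]; simp [dotProduct, sq]
  have huAu : u ⬝ᵥ A.mulVec u = y ⬝ᵥ A⁻¹.mulVec y := by
    rw [hAu, dotProduct_comm]
  set N : ℝ := ∑ i, (y i) ^ 2 with hN
  set p : ℝ := y ⬝ᵥ A.mulVec y with hpdef
  set t : ℝ := -N / p with ht
  have hnonneg : 0 ≤ (u + t • y) ⬝ᵥ A.mulVec (u + t • y) := by
    have := hA.posSemidef.dotProduct_mulVec_nonneg (u + t • y)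
    simpa using this
  have expand : (u + t • y) ⬝ᵥ A.mulVec (u + t • y) =
      (u ⬝ᵥ A.mulVec u) + t * (u ⬝ᵥ A.mulVec y) + t * (y ⬝ᵥ A.mulVec u)
        + t * t * (y ⬝ᵥ A.mulVec y) := by
    simp only [Matrix.mulVec_add, Matrix.mulVec_smul, dotProduct_add,
      add_dotProduct, dotProduct_smul, smul_dotProduct, smul_eq_mul]
    ring
  rw [expand, huAu, huAy, hyAu] at hnonneg
  have hq : 0 ≤ y ⬝ᵥ A⁻¹.mulVec y + t * N + t * N + t * t * p := hnonneg
  have hp' : p ≠ 0 := ne_of_gt hp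
  have h1 : t * N = -(N ^ 2) / p := by rw [ht]; ring
  have h2 : t * t * p = N ^ 2 / p := by rw [ht]; field_simp
  rw [h1, h2] at hq
  have key : N ^ 2 / p ≤ y ⬝ᵥ A⁻¹.mulVec y := by ring_nf at hq ⊢; linarith
  have := (div_le_iff₀ hp).mp key
  linarith

lemma my_quadform_lower {d : ℕ} (A : Matrix (Fin d) (Fin d) ℝ) (hA : A.PosDef) {K : ℝ}
    (hK : 0 < K) (hAent : ∀ i j, |A i j| ≤ K) (y : Fin d → ℝ) :
    ∑ i, (y i) ^ 2 ≤ (K * d) * (y ⬝ᵥ A⁻¹.mulVec y) := by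
  have hQ : 0 ≤ y ⬝ᵥ A⁻¹.mulVec y := by
    have := hA.inv.posSemidef.dotProduct_mulVec_nonneg y
    simpa using this
  have hN : 0 ≤ ∑ i, (y i) ^ 2 := Finset.sum_nonneg fun i _ => sq_nonneg _
  rcases eq_or_lt_of_le hN with h0 | hNpos
  · rw [← h0]; positivity
  have hcs := my_cs A hA y
  have hp : y ⬝ᵥ A.mulVec y ≤ K * d * ∑ i, (y i) ^ 2 :=
    le_trans (le_abs_self _) (my_quadform_abs_le A (le_of_lt hK) hAent y)
  nlinarith [mul_le_mul_of_nonneg_right hp hQ]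

lemma my_sqrt_inv_lip {k : ℝ} (hk : 0 < k) {a b : ℝ} (ha : k ≤ a) (hb : k ≤ b) :
    |a ^ (-(1:ℝ)/2) - b ^ (-(1:ℝ)/2)| ≤ (2 * k * Real.sqrt k)⁻¹ * |a - b| := by
  have ha0 : 0 < a := lt_of_lt_of_le hk ha
  have hb0 : 0 < b := lt_of_lt_of_le hk hb
  have hneg : (-(1:ℝ)/2) = -(1/2 : ℝ) := by norm_num
  have hsa : a ^ (-(1:ℝ)/2) = (Real.sqrt a)⁻¹ := by
    rw [hneg, Real.rpow_neg ha0.le, ← Real.sqrt_eq_rpow]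
  have hsb : b ^ (-(1:ℝ)/2) = (Real.sqrt b)⁻¹ := by
    rw [hneg, Real.rpow_neg hb0.le, ← Real.sqrt_eq_rpow]
  have hsa0 : 0 < Real.sqrt a := Real.sqrt_pos.2 ha0
  have hsb0 : 0 < Real.sqrt b := Real.sqrt_pos.2 hb0
  have hsk0 : 0 < Real.sqrt k := Real.sqrt_pos.2 hk
  have hka : Real.sqrt k ≤ Real.sqrt a := Real.sqrt_le_sqrt ha
  have hkb : Real.sqrt k ≤ Real.sqrt b := Real.sqrt_le_sqrt hb
  have hmulsa : Real.sqrt a * Real.sqrt a = a := Real.mul_self_sqrt ha0.le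
  have hmulsb : Real.sqrt b * Real.sqrt b = b := Real.mul_self_sqrt hb0.le
  have hmulsk : Real.sqrt k * Real.sqrt k = k := Real.mul_self_sqrt hk.le
  rw [hsa, hsb]
  have hid : (Real.sqrt a)⁻¹ - (Real.sqrt b)⁻¹ =
      (b - a) / (Real.sqrt a * Real.sqrt b * (Real.sqrt a + Real.sqrt b)) := by
    rw [eq_div_iff (by positivity)]
    field_simp
    linear_combination hmulsb - hmulsa
  rw [hid, abs_div, abs_sub_comm]
  rw [abs_of_pos (show (0:ℝ) < Real.sqrt a * Real.sqrt b * (Real.sqrt a + Real.sqrt b) by positivity)]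
  rw [div_eq_inv_mul]
  apply mul_le_mul_of_nonneg_right _ (abs_nonneg _)
  apply inv_anti₀ (by positivity)
  calc 2 * k * Real.sqrt k = Real.sqrt k * Real.sqrt k * (Real.sqrt k + Real.sqrt k) := by
        rw [hmulsk]; ring
    _ ≤ Real.sqrt a * Real.sqrt b * (Real.sqrt a + Real.sqrt b) := by
        apply mul_le_mul (mul_le_mul hka hkb hsk0.le hsa0.le) (by linarith) (by positivity)
          (by positivity)

lemma my_exp_diff {a b : ℝ} (ha : 0 ≤ a) (hb : 0 ≤ b) :
    |Real.exp (-a) - Real.exp (-b)| ≤ Real.exp (-(min a b)) * |a - b| := by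
  wlog hab : a ≤ b generalizing a b
  · rw [abs_sub_comm, abs_sub_comm a b, min_comm]
    exact this hb ha (le_of_not_ge hab)
  rw [min_eq_left hab]
  rw [abs_of_nonneg (sub_nonneg.2 (Real.exp_le_exp.2 (by linarith)))]
  rw [abs_of_nonpos (by linarith), neg_sub]
  have h1 : Real.exp (-b) = Real.exp (-a) * Real.exp (-(b - a)) := by
    rw [← Real.exp_add]; ring_nf
  rw [h1]
  have h2 : 1 - Real.exp (-(b - a)) ≤ b - a := by
    have := Real.add_one_le_exp (-(b - a))
    linarith
  calc Real.exp (-a) - Real.exp (-a) * Real.exp (-(b - a))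
      = Real.exp (-a) * (1 - Real.exp (-(b - a))) := by ring
    _ ≤ Real.exp (-a) * (b - a) := mul_le_mul_of_nonneg_left h2 (Real.exp_pos _).le

set_option maxHeartbeats 2000000 in
/-- Pointwise comparison of Gaussian densities for well-conditioned covariance matrices. -/
theorem gaussian_density_difference_bound (d : ℕ) (hd : 1 ≤ d) (K : ℝ) (hK : 0 < K) :
    ∃ c C : ℝ, 0 < c ∧ 0 < C ∧ ∀ S S' : Matrix (Fin d) (Fin d) ℝ,
      S.PosDef → S'.PosDef →
      (∀ i j, |S i j| + |S' i j| < K) →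
      1 / K < S.det → 1 / K < S'.det →
      ∀ y : Fin d → ℝ,
        |gaussianDensityMat S y - gaussianDensityMat S' y| ≤
          C * (1 + ∑ i, (y i)^2) * exp (-c * ∑ i, (y i)^2) *
            (⨆ k : Fin d, ⨆ l : Fin d, |S k l - S' k l|) := by
  have hd1 : (1:ℝ) ≤ (d:ℝ) := by exact_mod_cast hd
  have hdpos : (0:ℝ) < (d:ℝ) := by linarith
  set F : ℝ := d.factorial * (max K 1) ^ d with hFdef
  have hF1 : (0:ℝ) < F := by
    apply mul_pos
    · exact_mod_cast d.factorial_pos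
    · exact pow_pos (lt_of_lt_of_le one_pos (le_max_right _ _)) _
  set M : ℝ := K * F with hMdef
  have hM0 : 0 < M := mul_pos hK hF1
  set Ddet : ℝ := d * (d * F) with hDdef
  have hDdet0 : 0 < Ddet := by positivity
  set CS : ℝ := (2 * (1/K) * Real.sqrt (1/K))⁻¹ with hCSdef
  have hCS0 : 0 < CS := by positivity
  refine ⟨1/(2*(d:ℝ)*K), CS * Ddet + Real.sqrt K * (d*d*(M*M)*d) / 2 + 1,
    by positivity, by positivity, ?_⟩
  intro S S' hS hS' hent hdS hdS' y
  set N : ℝ := ∑ i, (y i)^2 with hN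
  have hN0 : 0 ≤ N := Finset.sum_nonneg fun i _ => sq_nonneg _
  set ε : ℝ := ⨆ k : Fin d, ⨆ l : Fin d, |S k l - S' k l| with hεdef
  have hεb : ∀ i j, |S i j - S' i j| ≤ ε := by
    intro i j
    have h1 : |S i j - S' i j| ≤ ⨆ l, |S i l - S' i l| :=
      le_ciSup (f := fun l => |S i l - S' i l|)
        (Set.Finite.bddAbove (Set.finite_range _)) j
    exact h1.trans (le_ciSup (f := fun k => ⨆ l, |S k l - S' k l|)
        (Set.Finite.bddAbove (Set.finite_range _)) i)
  have i0 : Fin d := ⟨0, hd⟩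
  have hε0 : 0 ≤ ε := le_trans (abs_nonneg _) (hεb i0 i0)
  have hSK : ∀ i j, |S i j| ≤ K := fun i j => by
    have := hent i j; have := abs_nonneg (S' i j); linarith
  have hS'K : ∀ i j, |S' i j| ≤ K := fun i j => by
    have := hent i j; have := abs_nonneg (S i j); linarith
  have hKinv : (0:ℝ) < 1/K := by positivity
  have hdetS : 0 < S.det := lt_trans hKinv hdS
  have hdetS' : 0 < S'.det := lt_trans hKinv hdS'
  have hUS : IsUnit S.det := (ne_of_gt hdetS).isUnit
  have hUS' : IsUnit S'.det := (ne_of_gt hdetS').isUnit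
  set q : ℝ := y ⬝ᵥ (S⁻¹).mulVec y with hqdef
  set q' : ℝ := y ⬝ᵥ (S'⁻¹).mulVec y with hq'def
  have hq0 : 0 ≤ q := by have := hS.inv.posSemidef.dotProduct_mulVec_nonneg y; simpa using this
  have hq'0 : 0 ≤ q' := by have := hS'.inv.posSemidef.dotProduct_mulVec_nonneg y; simpa using this
  have hqN : N ≤ K * d * q := by
    have := my_quadform_lower S hS hK hSK y
    rw [← hN, ← hqdef] at this; exact this
  have hq'N : N ≤ K * d * q' := by
    have := my_quadform_lower S' hS' hK hS'K y
    rw [← hN, ← hq'def] at this; exact this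
  have hcq : 1/(2*(d:ℝ)*K) * N ≤ q / 2 := by
    rw [one_div, inv_mul_le_iff₀ (by positivity)]
    exact hqN.trans_eq (by ring)
  have hcq' : 1/(2*(d:ℝ)*K) * N ≤ q' / 2 := by
    rw [one_div, inv_mul_le_iff₀ (by positivity)]
    exact hq'N.trans_eq (by ring)
  -- inverse entry bounds
  have hMS : ∀ i j, |S⁻¹ i j| ≤ M := fun i j => my_inv_entry_le S hK hSK hdS i j
  have hMS' : ∀ i j, |S'⁻¹ i j| ≤ M := fun i j => my_inv_entry_le S' hK hS'K hdS' i j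
  have hdiff : ∀ i j, |(S⁻¹ - S'⁻¹) i j| ≤ d * d * (M * M * ε) :=
    my_inv_sub_entry_le S S' hUS hUS' hM0.le hε0 hMS hMS' hεb
  have hqq' : |q - q'| ≤ d * d * (M * M * ε) * d * N := by
    have hid : q - q' = y ⬝ᵥ (S⁻¹ - S'⁻¹).mulVec y := by
      rw [hqdef, hq'def, Matrix.sub_mulVec, dotProduct_sub]
    rw [hid]
    have := my_quadform_abs_le (S⁻¹ - S'⁻¹) (by positivity) hdiff y
    rw [← hN] at this; exact this
  -- determinant difference
  have hdd : |S.det - S'.det| ≤ Ddet * ε := by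
    have := my_det_sub_le S S' hSK hS'K hεb
    calc |S.det - S'.det| ≤ d * (d * (d.factorial * (max K 1) ^ d)) * ε := this
      _ = Ddet * ε := by rw [hDdef, hFdef]
  -- rpow difference
  have hrd : |S.det ^ (-(1:ℝ)/2) - S'.det ^ (-(1:ℝ)/2)| ≤ CS * (Ddet * ε) := by
    have h1 := my_sqrt_inv_lip hKinv hdS.le hdS'.le
    rw [← hCSdef] at h1
    exact h1.trans (mul_le_mul_of_nonneg_left hdd hCS0.le)
  -- a' bound
  have ha'pos : 0 < S'.det ^ (-(1:ℝ)/2) := Real.rpow_pos_of_pos hdetS' _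
  have hsqK : S'.det ^ (-(1:ℝ)/2) ≤ Real.sqrt K := by
    have hneg : (-(1:ℝ)/2) = -(1/2 : ℝ) := by norm_num
    rw [hneg, Real.rpow_neg hdetS'.le, ← Real.sqrt_eq_rpow]
    have h1 : Real.sqrt (1/K) ≤ Real.sqrt S'.det := Real.sqrt_le_sqrt hdS'.le
    have h2 : (Real.sqrt S'.det)⁻¹ ≤ (Real.sqrt (1/K))⁻¹ :=
      inv_anti₀ (Real.sqrt_pos.2 hKinv) h1
    calc (Real.sqrt S'.det)⁻¹ ≤ (Real.sqrt (1/K))⁻¹ := h2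
      _ = Real.sqrt K := by rw [one_div, Real.sqrt_inv, inv_inv]
  -- exponential bounds
  set e : ℝ := Real.exp (-(1/(2*(d:ℝ)*K)) * N) with hedef
  have hE : Real.exp (-q/2) ≤ e := by
    rw [hedef]
    apply Real.exp_le_exp.2
    rw [neg_div, neg_mul]
    exact neg_le_neg hcq
  have hEdiff : |Real.exp (-q/2) - Real.exp (-q'/2)| ≤ e * (d * d * (M * M * ε) * d * N / 2) := by
    have h1 := my_exp_diff (by positivity : (0:ℝ) ≤ q/2) (by positivity : (0:ℝ) ≤ q'/2)
    have h2 : Real.exp (-(min (q/2) (q'/2))) ≤ e := by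
      rw [hedef]
      apply Real.exp_le_exp.2
      rw [neg_mul]
      exact neg_le_neg (le_min hcq hcq')
    have h3 : |q/2 - q'/2| = |q - q'| / 2 := by
      rw [show q/2 - q'/2 = (q - q')/2 by ring, abs_div]
      norm_num
    calc |Real.exp (-q/2) - Real.exp (-q'/2)|
        = |Real.exp (-(q/2)) - Real.exp (-(q'/2))| := by rw [neg_div, neg_div]
      _ ≤ Real.exp (-(min (q/2) (q'/2))) * |q/2 - q'/2| := h1
      _ ≤ e * (d * d * (M * M * ε) * d * N / 2) := by
          apply mul_le_mul h2 _ (abs_nonneg _) (Real.exp_pos _).le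
          rw [h3]
          have := hqq'
          linarith
  -- decomposition
  set c0 : ℝ := (2*π) ^ (-(d:ℝ)/2) with hc0def
  have hc00 : 0 < c0 := Real.rpow_pos_of_pos (by positivity) _
  have hc01 : c0 ≤ 1 := by
    rw [hc0def]
    apply Real.rpow_le_one_of_one_le_of_nonpos
    · nlinarith [Real.pi_gt_three]
    · rw [neg_div]
      exact neg_nonpos_of_nonneg (by positivity)
  set a : ℝ := S.det ^ (-(1:ℝ)/2) with hadef
  set a' : ℝ := S'.det ^ (-(1:ℝ)/2) with ha'def
  have hgauss : gaussianDensityMat S y - gaussianDensityMat S' y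
      = c0 * ((a - a') * Real.exp (-q/2) + a' * (Real.exp (-q/2) - Real.exp (-q'/2))) := by
    unfold gaussianDensityMat
    rw [← hqdef, ← hq'def, ← hadef, ← ha'def, ← hc0def]
    ring
  have hX : |gaussianDensityMat S y - gaussianDensityMat S' y|
      ≤ |a - a'| * Real.exp (-q/2) + a' * |Real.exp (-q/2) - Real.exp (-q'/2)| := by
    rw [hgauss, abs_mul, abs_of_pos hc00]
    have h1 : |(a - a') * Real.exp (-q/2) + a' * (Real.exp (-q/2) - Real.exp (-q'/2))|
        ≤ |a - a'| * Real.exp (-q/2) + a' * |Real.exp (-q/2) - Real.exp (-q'/2)| := by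
      refine le_trans (abs_add_le _ _) ?_
      rw [abs_mul, abs_mul, abs_of_pos (Real.exp_pos _), abs_of_pos ha'pos]
    calc c0 * |(a - a') * Real.exp (-q/2) + a' * (Real.exp (-q/2) - Real.exp (-q'/2))|
        ≤ 1 * |(a - a') * Real.exp (-q/2) + a' * (Real.exp (-q/2) - Real.exp (-q'/2))| :=
          mul_le_mul_of_nonneg_right hc01 (abs_nonneg _)
      _ = |(a - a') * Real.exp (-q/2) + a' * (Real.exp (-q/2) - Real.exp (-q'/2))| := one_mul _
      _ ≤ _ := h1
  -- final combination
  have hterm1 : |a - a'| * Real.exp (-q/2) ≤ CS * (Ddet * ε) * e := by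
    apply mul_le_mul hrd hE (Real.exp_pos _).le (by positivity)
  have hterm2 : a' * |Real.exp (-q/2) - Real.exp (-q'/2)|
      ≤ Real.sqrt K * (e * (d * d * (M * M * ε) * d * N / 2)) := by
    apply mul_le_mul hsqK hEdiff (abs_nonneg _) (Real.sqrt_nonneg _)
  have he0 : 0 < e := Real.exp_pos _
  calc |gaussianDensityMat S y - gaussianDensityMat S' y|
      ≤ CS * (Ddet * ε) * e + Real.sqrt K * (e * (d * d * (M * M * ε) * d * N / 2)) := by
        linarith [hX, hterm1, hterm2]
    _ = (CS * Ddet + Real.sqrt K * (d*d*(M*M)*d) / 2 * N) * (e * ε) := by ring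
    _ ≤ ((CS * Ddet + Real.sqrt K * (d*d*(M*M)*d) / 2 + 1) * (1 + N)) * (e * ε) := by
        have hC1 : 0 ≤ Real.sqrt K * (d*d*(M*M)*d) / 2 := by positivity
        have h1 : CS * Ddet + Real.sqrt K * (d*d*(M*M)*d) / 2 * N
            ≤ (CS * Ddet + Real.sqrt K * (d*d*(M*M)*d) / 2 + 1) * (1 + N) := by
          have hA : 0 ≤ CS * Ddet := mul_nonneg hCS0.le hDdet0.le
          have hsum : 0 ≤ (CS * Ddet + Real.sqrt K * (d*d*(M*M)*d) / 2 + 1) * N :=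
            mul_nonneg (by linarith) hN0
          have hexp : (CS * Ddet + Real.sqrt K * (d*d*(M*M)*d) / 2 + 1) * (1 + N)
              - (CS * Ddet + Real.sqrt K * (d*d*(M*M)*d) / 2 * N)
              = Real.sqrt K * (d*d*(M*M)*d) / 2 + 1
                + (CS * Ddet + 1) * N := by ring
          have hrest : 0 ≤ (CS * Ddet + 1) * N := mul_nonneg (by linarith) hN0
          linarith
        exact mul_le_mul_of_nonneg_right h1 (by positivity)
    _ = (CS * Ddet + Real.sqrt K * (d*d*(M*M)*d) / 2 + 1) * (1 + N) * e * ε := by ring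
end
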